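/- Let n ≥ 1, for 1 ≤ i ≤ n−1 let s_i be the permutation (i, i+1)(ī, \overline{i+1}) of {1,…,2n}, and for 0 ≤ i ≤ n−1 let t_i be the transposition (i+1, \overline{i+1}). For integers m, a with a ≥ 1 and m + a ≤ n, the product b⁻_{m,a} := t_m s_{m+1} s_{m+2} ⋯ s_{m+a−1} equals the single 2a-cycle (m+1, m+2, …, m+a, \overline{m+1}, \overline{m+2}, …, \overline{m+a}). -/

import Mathlib

/-- The element of Fin (2n) corresponding to the 1-based element k of {1,…,2n}. -/
def el (n : ℕ) (hn : 1 ≤ n) (k : ℕ) : Fin (2 * n) :=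
  ⟨(k - 1) % (2 * n), Nat.mod_lt _ (by omega)⟩

/-- The permutation s_i = (i, i+1)(ī, \overline{i+1}) of {1,…,2n}. -/
def sPerm (n : ℕ) (hn : 1 ≤ n) (i : ℕ) : Equiv.Perm (Fin (2 * n)) :=
  Equiv.swap (el n hn i) (el n hn (i + 1)) *
    Equiv.swap (el n hn i).rev (el n hn (i + 1)).rev

/-- The transposition t_i = (i+1, \overline{i+1}) of {1,…,2n}. -/
def tPerm (n : ℕ) (hn : 1 ≤ n) (i : ℕ) : Equiv.Perm (Fin (2 * n)) :=
  Equiv.swap (el n hn (i + 1)) (el n hn (i + 1)).rev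

theorem el_val (n : ℕ) (hn : 1 ≤ n) (k : ℕ) (h2 : k ≤ 2 * n) :
    (el n hn k).val = k - 1 := Nat.mod_eq_of_lt (by omega)

theorem el_rev_val (n : ℕ) (hn : 1 ≤ n) (k : ℕ) (h1 : 1 ≤ k) (h2 : k ≤ 2 * n) :
    (el n hn k).rev.val = 2 * n - k := by
  rw [Fin.val_rev, el_val n hn k h2]; omega

theorem nodupEF (n : ℕ) (hn : 1 ≤ n) (m b c : ℕ) (hb : m + b ≤ n) (hc : m + c ≤ n) :
    (((List.range b).map fun j => el n hn (m + 1 + j)) ++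
      ((List.range c).map fun j => (el n hn (m + 1 + j)).rev)).Nodup := by
  rw [List.nodup_append]
  refine ⟨?_, ?_, ?_⟩
  · refine List.Nodup.map_on ?_ List.nodup_range
    intro x hx y hy hxy
    simp only [List.mem_range] at hx hy
    have := congrArg Fin.val hxy
    rw [el_val n hn _ (by omega), el_val n hn _ (by omega)] at this
    omega
  · refine List.Nodup.map_on ?_ List.nodup_range
    intro x hx y hy hxy
    simp only [List.mem_range] at hx hy
    have := congrArg Fin.val hxy
    rw [el_rev_val n hn _ (by omega) (by omega),
      el_rev_val n hn _ (by omega) (by omega)] at this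
    omega
  · intro x hx y hy hxy
    subst hxy
    simp only [List.mem_map, List.mem_range] at hx hy
    obtain ⟨i, hi, rfl⟩ := hx
    obtain ⟨j, hj, hji⟩ := hy
    have := congrArg Fin.val hji
    rw [el_val n hn _ (by omega), el_rev_val n hn _ (by omega) (by omega)] at this
    omega

/-- b⁻_{m,a} = t_m s_{m+1} s_{m+2} ⋯ s_{m+a-1} equals the single 2a-cycle
(m+1, …, m+a, \overline{m+1}, …, \overline{m+a}). -/
theorem stmt6 (n : ℕ) (hn : 1 ≤ n) (m a : ℕ) (ha : 1 ≤ a) (hma : m + a ≤ n) :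
    tPerm n hn m * ((List.range (a - 1)).map fun j => sPerm n hn (m + 1 + j)).prod =
      List.formPerm (((List.range a).map fun j => el n hn (m + 1 + j)) ++
        ((List.range a).map fun j => (el n hn (m + 1 + j)).rev)) := by
  set g : ℕ → Fin (2 * n) := fun j => el n hn (m + 1 + j) with hg
  set f : ℕ → Fin (2 * n) := fun j => (el n hn (m + 1 + j)).rev with hf
  revert hma
  induction a, ha using Nat.le_induction with
  | base =>
    intro hma
    simp [tPerm, List.range_succ, List.formPerm_pair]
    rfl
  | succ a ha IH =>
    intro hma
    have IH' := IH (by omega)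
    obtain ⟨b, rfl⟩ : ∃ b, a = b + 1 := ⟨a - 1, by omega⟩
    have hE2 : (List.range (b + 2)).map g
        = ((List.range b).map g ++ [g b]) ++ [g (b + 1)] := by
      rw [List.range_succ, List.range_succ]; simp
    have hF2 : (List.range (b + 2)).map f
        = ((List.range b).map f ++ [f b]) ++ [f (b + 1)] := by
      rw [List.range_succ, List.range_succ]; simp
    have hE1 : (List.range (b + 1)).map g = (List.range b).map g ++ [g b] := by
      rw [List.range_succ]; simp
    have hF1 : (List.range (b + 1)).map f = (List.range b).map f ++ [f b] := by
      rw [List.range_succ]; simp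
    -- rewrite the RHS list
    have h1 : (List.range (b + 2)).map g ++ (List.range (b + 2)).map f
        = ((List.range (b + 2)).map g ++ (List.range b).map f) ++ [f b, f (b + 1)] := by
      rw [hF2]; simp
    rw [h1, List.formPerm_append_pair]
    have h2 : ((List.range (b + 2)).map g ++ (List.range b).map f) ++ [f b]
        = (List.range (b + 2)).map g ++ (List.range (b + 1)).map f := by
      rw [hF1]; simp
    rw [h2]
    have h3 : ((List.range (b + 2)).map g ++ (List.range (b + 1)).map f).formPerm
        = ((List.range (b + 1)).map f ++ (List.range (b + 2)).map g).formPerm :=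
      List.formPerm_eq_of_isRotated
        (nodupEF n hn m (b + 2) (b + 1) (by omega) (by omega)) List.isRotated_append
    rw [h3]
    have h4 : (List.range (b + 1)).map f ++ (List.range (b + 2)).map g
        = (((List.range (b + 1)).map f ++ (List.range b).map g)) ++ [g b, g (b + 1)] := by
      rw [hE2]; simp
    rw [h4, List.formPerm_append_pair]
    have h5 : ((List.range (b + 1)).map f ++ (List.range b).map g) ++ [g b]
        = (List.range (b + 1)).map f ++ (List.range (b + 1)).map g := by
      rw [hE1]; simp
    rw [h5]
    have h6 : ((List.range (b + 1)).map f ++ (List.range (b + 1)).map g).formPerm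
        = ((List.range (b + 1)).map g ++ (List.range (b + 1)).map f).formPerm :=
      (List.formPerm_eq_of_isRotated
        (nodupEF n hn m (b + 1) (b + 1) (by omega) (by omega)) List.isRotated_append).symm
    rw [h6, ← IH']
    -- now handle the LHS
    have hL : (List.range (b + 1 + 1 - 1)).map (fun j => sPerm n hn (m + 1 + j))
        = (List.range (b + 1 - 1)).map (fun j => sPerm n hn (m + 1 + j))
          ++ [sPerm n hn (m + 1 + b)] := by
      show (List.range (b + 1)).map _ = (List.range b).map _ ++ _
      rw [List.range_succ]; simp
    rw [hL, List.prod_append]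
    have hs : sPerm n hn (m + 1 + b)
        = Equiv.swap (g b) (g (b + 1)) * Equiv.swap (f b) (f (b + 1)) := rfl
    rw [hs]
    simp [mul_assoc]
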